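/- arXiv:1602.07072 — 3 statements merged into one kernel-verified Lean document; each statement's English description precedes it below -/
import Mathlib

section
/- Variational formula for the timelike Funk metric: for p, q ∈ Ω with p < q, F(p,q) = ⨅ (infimum) over π ∈ 𝒫(q) of Real.log (d(p, π) / d(q, π)), and the infimum is attained by every supporting hyperplane of I passing through b(p,q) (such hyperplanes exist and belong to 𝒫(q)). -/
open RealInnerProductSpace
open scoped Classical

noncomputable section

/-- Euclidean space of dimension `n`. -/
abbrev Euc (n : ℕ) := EuclideanSpace ℝ (Fin n)

/-- The exterior `Ω = E \ closure I` of the convex set `I`. -/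
def Omega {n : ℕ} (I : Set (Euc n)) : Set (Euc n) := (closure I)ᶜ

/-- The timelike Funk partial order: `p < q` iff `p ≠ q`, the segment `[p,q]` lies in `Ω`,
and the ray from `p` through `q` enters `I` beyond `q`. -/
def funkLt {n : ℕ} (I : Set (Euc n)) (p q : Euc n) : Prop :=
  p ≠ q ∧ segment ℝ p q ⊆ Omega I ∧ ∃ t > (0:ℝ), q + t • (q - p) ∈ I

/-- The parameter at which the ray from `p` through `q` first hits `closure I` (beyond `q`). -/
def funkT0 {n : ℕ} (I : Set (Euc n)) (p q : Euc n) : ℝ :=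
  sInf {t : ℝ | 0 < t ∧ q + t • (q - p) ∈ closure I}

/-- The point `b(p,q)` where the ray from `p` through `q` first hits `K = frontier I`. -/
def funkB {n : ℕ} (I : Set (Euc n)) (p q : Euc n) : Euc n :=
  q + funkT0 I p q • (q - p)

/-- The timelike Funk metric `F(p,q) = log (dist p b(p,q) / dist q b(p,q))`, with `F(p,p) = 0`. -/
def funkF {n : ℕ} (I : Set (Euc n)) (p q : Euc n) : ℝ :=
  if p = q then 0 else Real.log (dist p (funkB I p q) / dist q (funkB I p q))

/-- Supporting hyperplanes of `I`, encoded as pairs `(u, c)` with `‖u‖ = 1`: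
`I ⊆ {x | ⟪u,x⟫ < c}` and `closure I` meets `{x | ⟪u,x⟫ = c}`. -/
def SuppH {n : ℕ} (I : Set (Euc n)) : Set (Euc n × ℝ) :=
  {uc | ‖uc.1‖ = 1 ∧ I ⊆ {x | ⟪uc.1, x⟫ < uc.2} ∧
    (closure I ∩ {x | ⟪uc.1, x⟫ = uc.2}).Nonempty}

/-- `𝒫(z)`: supporting hyperplanes of `I` separating `z` from `I`. -/
def SuppHSep {n : ℕ} (I : Set (Euc n)) (z : Euc n) : Set (Euc n × ℝ) :=
  {uc | uc ∈ SuppH I ∧ uc.2 < ⟪uc.1, z⟫}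

/-- `D(p)`: the cone of timelike directions at `p`. -/
def Dcone {n : ℕ} (I : Set (Euc n)) (p : Euc n) : Set (Euc n) :=
  {v | ∃ t > (0:ℝ), p + t • v ∈ I}

/-- `τ(p,v)`: the time for the ray `p + t • v` to reach `closure I`. -/
def tauF {n : ℕ} (I : Set (Euc n)) (p v : Euc n) : ℝ :=
  sInf {t : ℝ | 0 < t ∧ p + t • v ∈ closure I}

/-- The timelike Minkowski functional `P(p,v) = 1/τ(p,v)` of the timelike Funk metric. -/
def Pmink {n : ℕ} (I : Set (Euc n)) (p v : Euc n) : ℝ := 1 / tauF I p v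

lemma infDist_hyperplane' {n : ℕ} {u : Euc n} (hu : ‖u‖ = 1) (c : ℝ) (x : Euc n) :
    Metric.infDist x {y : Euc n | ⟪u, y⟫ = c} = |⟪u, x⟫ - c| := by
  have hmem : x - (⟪u, x⟫ - c) • u ∈ {y : Euc n | ⟪u, y⟫ = c} := by
    simp only [Set.mem_setOf_eq, inner_sub_right, real_inner_smul_right,
      real_inner_self_eq_norm_sq, hu]
    ring
  apply le_antisymm
  · calc Metric.infDist x {y : Euc n | ⟪u, y⟫ = c} ≤ dist x (x - (⟪u, x⟫ - c) • u) :=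
        Metric.infDist_le_dist_of_mem hmem
      _ = |⟪u, x⟫ - c| := by
        rw [dist_eq_norm]
        simp [norm_smul, hu]
  · by_contra h
    push_neg at h
    obtain ⟨y, hy, hdy⟩ := (Metric.infDist_lt_iff ⟨_, hmem⟩).1 h
    have h1 : ⟪u, x⟫ - c = ⟪u, x - y⟫ := by
      rw [inner_sub_right, hy]
    have h2 : |⟪u, x - y⟫| ≤ ‖x - y‖ := by
      calc |⟪u, x - y⟫| ≤ ‖u‖ * ‖x - y‖ := abs_real_inner_le_norm u (x - y)
        _ = ‖x - y‖ := by rw [hu, one_mul]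
    rw [dist_eq_norm] at hdy
    rw [h1] at hdy
    linarith [h2, hdy]

lemma exists_supp' {n : ℕ} {I : Set (Euc n)} (hne : I.Nonempty) (hop : IsOpen I)
    (hconv : Convex ℝ I) {b : Euc n} (hbcl : b ∈ closure I) (hbI : b ∉ I) :
    ∃ uc : Euc n × ℝ, uc ∈ SuppH I ∧ ⟪uc.1, b⟫ = uc.2 := by
  obtain ⟨f, hf⟩ := geometric_hahn_banach_open_point hconv hop hbI
  set v := (InnerProductSpace.toDual ℝ (Euc n)).symm f with hvdef
  have hv : ∀ x, ⟪v, x⟫ = f x := fun x => InnerProductSpace.toDual_symm_apply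
  have hv0 : v ≠ 0 := by
    obtain ⟨z, hz⟩ := hne
    intro h
    have h1 := hf z hz
    rw [← hv z, ← hv b, h] at h1
    simp at h1
  have hnv : 0 < ‖v‖ := norm_pos_iff.2 hv0
  refine ⟨(‖v‖⁻¹ • v, ‖v‖⁻¹ * f b), ⟨?_, ?_, ⟨b, hbcl, ?_⟩⟩, ?_⟩
  · rw [norm_smul, norm_inv, norm_norm, inv_mul_cancel₀ hnv.ne']
  · intro x hx
    simp only [Set.mem_setOf_eq, real_inner_smul_left, hv]
    exact mul_lt_mul_of_pos_left (hf x hx) (inv_pos.2 hnv)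
  · simp only [Set.mem_setOf_eq, real_inner_smul_left, hv]
  · simp only [real_inner_smul_left, hv]


set_option maxHeartbeats 1000000 in
/-- variational formula `F(p,q) = ⨅_{π ∈ 𝒫(q)} log (d(p,π)/d(q,π))`;
moreover supporting hyperplanes through `b(p,q)` exist, belong to `𝒫(q)`,
and each attains the infimum. -/
theorem funkF_eq_iInf_log_infDist_div {n : ℕ} (hn : 1 ≤ n) (I : Set (Euc n))
    (hne : I.Nonempty) (hop : IsOpen I) (hconv : Convex ℝ I)
    (hcl : closure I ≠ Set.univ)
    (p q : Euc n) (hp : p ∈ Omega I) (hq : q ∈ Omega I)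
    (hpq : funkLt I p q) :
    funkF I p q =
      (⨅ uc : SuppHSep I q,
        Real.log (Metric.infDist p {x | ⟪uc.1.1, x⟫ = uc.1.2} /
          Metric.infDist q {x | ⟪uc.1.1, x⟫ = uc.1.2})) ∧
    (∃ uc ∈ SuppH I, ⟪uc.1, funkB I p q⟫ = uc.2) ∧
    (∀ uc ∈ SuppH I, ⟪uc.1, funkB I p q⟫ = uc.2 →
      uc ∈ SuppHSep I q ∧
      Real.log (Metric.infDist p {x | ⟪uc.1, x⟫ = uc.2} /
        Metric.infDist q {x | ⟪uc.1, x⟫ = uc.2}) = funkF I p q) := by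
  obtain ⟨hne', hseg, t₁, ht₁pos, ht₁I⟩ := hpq
  have hq' : q ∉ closure I := hq
  have hqp : q - p ≠ 0 := sub_ne_zero.2 (Ne.symm hne')
  have hnqp : 0 < ‖q - p‖ := norm_pos_iff.2 hqp
  set S : Set ℝ := {t : ℝ | 0 < t ∧ q + t • (q - p) ∈ closure I} with hSdef
  have hSne : S.Nonempty := ⟨t₁, ht₁pos, subset_closure ht₁I⟩
  have hclne : (closure I).Nonempty := hne.closure
  have hε : 0 < Metric.infDist q (closure I) :=
    (isClosed_closure.notMem_iff_infDist_pos hclne).1 hq'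
  set δ := Metric.infDist q (closure I) / ‖q - p‖ with hδdef
  have hδpos : 0 < δ := div_pos hε hnqp
  have hSδ : ∀ t ∈ S, δ ≤ t := by
    rintro t ⟨htpos, htc⟩
    have hd : Metric.infDist q (closure I) ≤ dist q (q + t • (q - p)) :=
      Metric.infDist_le_dist_of_mem htc
    have hdd : dist q (q + t • (q - p)) = t * ‖q - p‖ := by
      rw [dist_eq_norm]
      simp [norm_smul, abs_of_pos htpos]
    rw [hdd] at hd
    rw [hδdef, div_le_iff₀ hnqp]
    exact hd
  have hSbdd : BddBelow S := ⟨0, fun t ht => ht.1.le⟩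
  have hSclosed : IsClosed S := by
    have hSeq : S = Set.Ici δ ∩ (fun t : ℝ => q + t • (q - p)) ⁻¹' closure I := by
      ext t
      constructor
      · intro ht; exact ⟨hSδ t ht, ht.2⟩
      · rintro ⟨h1, h2⟩; exact ⟨lt_of_lt_of_le hδpos h1, h2⟩
    rw [hSeq]
    exact isClosed_Ici.inter (IsClosed.preimage (by continuity) isClosed_closure)
  set t₀ := funkT0 I p q with ht₀def
  have ht₀S : t₀ ∈ S := hSclosed.csInf_mem hSne hSbdd
  obtain ⟨ht₀pos, hbcl⟩ := ht₀S
  have hbB : funkB I p q = q + t₀ • (q - p) := rfl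
  have hbI : funkB I p q ∉ I := by
    intro hbmem
    have hopen : IsOpen ((fun t : ℝ => q + t • (q - p)) ⁻¹' I) := hop.preimage (by continuity)
    obtain ⟨η, hη, hball⟩ := Metric.isOpen_iff.1 hopen t₀ hbmem
    set t := max (t₀ / 2) (t₀ - η / 2) with htdef
    have htlt : t < t₀ := max_lt (by linarith) (by linarith)
    have htpos : 0 < t := lt_of_lt_of_le (half_pos ht₀pos) (le_max_left _ _)
    have htb : t ∈ Metric.ball t₀ η := by
      rw [Metric.mem_ball, Real.dist_eq, abs_of_nonpos (by linarith)]
      have : t₀ - η / 2 ≤ t := le_max_right _ _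
      linarith
    have htS : t ∈ S := ⟨htpos, subset_closure (hball htb)⟩
    exact absurd (csInf_le hSbdd htS) (not_le.2 htlt)
  have hb_sub_p : funkB I p q - p = (1 + t₀) • (q - p) := by
    rw [hbB, add_smul, one_smul]
    module
  have hb_sub_q : funkB I p q - q = t₀ • (q - p) := by
    rw [hbB]
    module
  have hdpb : dist p (funkB I p q) = (1 + t₀) * ‖q - p‖ := by
    rw [dist_comm, dist_eq_norm, hb_sub_p, norm_smul, Real.norm_eq_abs,
      abs_of_pos (by linarith)]
  have hdqb : dist q (funkB I p q) = t₀ * ‖q - p‖ := by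
    rw [dist_comm, dist_eq_norm, hb_sub_q, norm_smul, Real.norm_eq_abs, abs_of_pos ht₀pos]
  have hR : (0:ℝ) < (1 + t₀) / t₀ := div_pos (by linarith) ht₀pos
  have hF : funkF I p q = Real.log ((1 + t₀) / t₀) := by
    rw [funkF, if_neg hne', hdpb, hdqb, mul_div_mul_right _ _ hnqp.ne']
  have hclhalf : ∀ uc ∈ SuppH I, ∀ x ∈ closure I, ⟪uc.1, x⟫ ≤ uc.2 := by
    rintro ⟨u, c⟩ ⟨hu1, huI, _⟩ x hx
    have hclsub : closure I ⊆ {y : Euc n | ⟪u, y⟫ ≤ c} :=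
      closure_minimal (fun y hy => show ⟪u, y⟫ ≤ c from le_of_lt (huI hy))
        (isClosed_le (Continuous.inner continuous_const continuous_id) continuous_const)
    exact hclsub hx
  have hbound : ∀ uc ∈ SuppHSep I q,
      Real.log ((1 + t₀) / t₀) ≤
        Real.log (Metric.infDist p {x | ⟪uc.1, x⟫ = uc.2} /
          Metric.infDist q {x | ⟪uc.1, x⟫ = uc.2}) := by
    rintro ⟨u, c⟩ ⟨hSH, hsep⟩
    have hb' : 0 < ⟪u, q⟫ - c := sub_pos.2 hsep
    have hble : ⟪u, q⟫ + t₀ * ⟪u, q - p⟫ ≤ c := by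
      have h0 := hclhalf (u, c) hSH _ hbcl
      rwa [inner_add_right, real_inner_smul_right] at h0
    have hs : ⟪u, q - p⟫ = ⟪u, q⟫ - ⟪u, p⟫ := inner_sub_right u q p
    have ha : (⟪u, q⟫ - c) * (1 + t₀) ≤ (⟪u, p⟫ - c) * t₀ := by nlinarith
    have hapos : 0 < ⟪u, p⟫ - c := by nlinarith
    obtain ⟨hu1, huI, hnonempty⟩ := hSH
    rw [infDist_hyperplane' hu1, infDist_hyperplane' hu1, abs_of_pos hapos, abs_of_pos hb']
    apply Real.log_le_log hR
    rw [div_le_div_iff₀ ht₀pos hb']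
    nlinarith
  have hexact : ∀ uc ∈ SuppH I, ⟪uc.1, funkB I p q⟫ = uc.2 →
      uc.2 < ⟪uc.1, q⟫ ∧
      Real.log (Metric.infDist p {x | ⟪uc.1, x⟫ = uc.2} /
        Metric.infDist q {x | ⟪uc.1, x⟫ = uc.2}) = Real.log ((1 + t₀) / t₀) := by
    rintro ⟨u, c⟩ ⟨hu1, huI, hnonempty⟩ hplane
    dsimp only at hu1 huI hnonempty hplane
    have heq : ⟪u, q⟫ + t₀ * ⟪u, q - p⟫ = c := by
      rw [← hplane, hbB, inner_add_right, real_inner_smul_right]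
    have ht₁ge : t₀ ≤ t₁ := csInf_le hSbdd ⟨ht₁pos, subset_closure ht₁I⟩
    have ht₁ne : t₀ ≠ t₁ := by
      intro h
      apply hbI
      rw [hbB, h]
      exact ht₁I
    have ht₁gt : t₀ < t₁ := lt_of_le_of_ne ht₁ge ht₁ne
    have hlt : ⟪u, q⟫ + t₁ * ⟪u, q - p⟫ < c := by
      have h1 := huI ht₁I
      simp only [Set.mem_setOf_eq] at h1
      rwa [inner_add_right, real_inner_smul_right] at h1
    have hsneg : ⟪u, q - p⟫ < 0 := by nlinarith
    have hb' : 0 < ⟪u, q⟫ - c := by nlinarith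
    have hs : ⟪u, q - p⟫ = ⟪u, q⟫ - ⟪u, p⟫ := inner_sub_right u q p
    have ha : ⟪u, p⟫ - c = -((1 + t₀) * ⟪u, q - p⟫) := by linarith
    have hb'eq : ⟪u, q⟫ - c = -(t₀ * ⟪u, q - p⟫) := by linarith
    refine ⟨by linarith, ?_⟩
    rw [infDist_hyperplane' hu1, infDist_hyperplane' hu1,
      abs_of_pos (by nlinarith), abs_of_pos hb', ha, hb'eq]
    congr 1
    rw [neg_div_neg_eq, mul_div_mul_right _ _ hsneg.ne]
  obtain ⟨uc₀, huc₀SH, huc₀plane⟩ := exists_supp' hne hop hconv (hbB ▸ hbcl) hbI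
  have huc₀sep : uc₀ ∈ SuppHSep I q := ⟨huc₀SH, (hexact uc₀ huc₀SH huc₀plane).1⟩
  haveI hNE : Nonempty (SuppHSep I q) := ⟨⟨uc₀, huc₀sep⟩⟩
  refine ⟨?_, ⟨uc₀, huc₀SH, huc₀plane⟩, fun uc hSH hpl =>
    ⟨⟨hSH, (hexact uc hSH hpl).1⟩, by rw [(hexact uc hSH hpl).2, hF]⟩⟩
  rw [hF]
  apply le_antisymm
  · exact le_ciInf fun uc => hbound uc.1 uc.2
  · have hb2 : BddBelow (Set.range fun uc : SuppHSep I q =>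
        Real.log (Metric.infDist p {x | ⟪uc.1.1, x⟫ = uc.1.2} /
          Metric.infDist q {x | ⟪uc.1.1, x⟫ = uc.1.2})) := by
      refine ⟨Real.log ((1 + t₀) / t₀), ?_⟩
      rintro x ⟨uc, rfl⟩
      exact hbound uc.1 uc.2
    have hle := ciInf_le hb2 (⟨uc₀, huc₀sep⟩ : SuppHSep I q)
    rwa [(hexact uc₀ huc₀SH huc₀plane).2] at hle
end
end

section
/- The timelike Funk metric is the intrinsic timelike Finsler distance of P (length-maximizing property): let p, q ∈ Ω with p < q, and let σ : [0,1] → Ω be a C¹ curve with σ(0) = p, σ(1) = q, and σ'(t) ∈ D(σ(t)) for every t ∈ [0,1] (a timelike curve). Then ∫₀¹ P(σ(t), σ'(t)) dt ≤ F(p,q). Consequently, F(p,q) equals the supremum of ∫₀¹ P(σ(t), σ'(t)) dt over all such timelike C¹ curves from p to q, the supremum being attained by the straight segment σ(t) = p + t • (q − p). -/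
open RealInnerProductSpace
open scoped Classical

noncomputable section

lemma tau_mem {n : ℕ} {I : Set (Euc n)} {p v : Euc n} (hp : p ∉ closure I)
    (hv : ∃ t > (0:ℝ), p + t • v ∈ closure I) :
    0 < tauF I p v ∧ p + tauF I p v • v ∈ closure I := by
  obtain ⟨t₁, ht₁, hmem⟩ := hv
  have hvne : v ≠ 0 := by
    rintro rfl
    simp at hmem
    exact hp hmem
  obtain ⟨ε, hε, hball⟩ := Metric.isOpen_iff.1 (isClosed_closure (s := I)).isOpen_compl p hp
  set S := {t : ℝ | 0 < t ∧ p + t • v ∈ closure I} with hS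
  have hlb : ∀ s ∈ S, ε / ‖v‖ ≤ s := by
    rintro s ⟨hs0, hsmem⟩
    by_contra h
    push_neg at h
    have : p + s • v ∈ Metric.ball p ε := by
      simp [Metric.mem_ball, dist_eq_norm, norm_smul, abs_of_pos hs0]
      calc s * ‖v‖ < (ε / ‖v‖) * ‖v‖ := mul_lt_mul_of_pos_right h (norm_pos_iff.2 hvne)
        _ = ε := div_mul_cancel₀ ε (norm_ne_zero_iff.2 hvne)
    exact (hball this) hsmem
  have hδ : 0 < ε / ‖v‖ := div_pos hε (norm_pos_iff.2 hvne)
  have hSne : S.Nonempty := ⟨t₁, ht₁, hmem⟩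
  have hSeq : S = {t : ℝ | ε / ‖v‖ ≤ t ∧ p + t • v ∈ closure I} := by
    ext t
    exact ⟨fun ht => ⟨hlb t ht, ht.2⟩, fun ht => ⟨lt_of_lt_of_le hδ ht.1, ht.2⟩⟩
  have hclosed : IsClosed S := by
    rw [hSeq]
    exact (isClosed_le continuous_const continuous_id).inter
      (isClosed_closure.preimage (by continuity))
  have := hclosed.csInf_mem hSne ⟨ε / ‖v‖, hlb⟩
  exact ⟨this.1, this.2⟩

lemma length_le_log {n : ℕ} {I : Set (Euc n)} {u : Euc n} {c : ℝ}
    (hIc : closure I ⊆ {x | ⟪u, x⟫ ≤ c})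
    {σ σ' : ℝ → Euc n}
    (hσ : ∀ t ∈ Set.Icc (0:ℝ) 1, HasDerivAt σ (σ' t) t)
    (hσ' : ContinuousOn σ' (Set.Icc (0:ℝ) 1))
    (hΩ : ∀ t ∈ Set.Icc (0:ℝ) 1, σ t ∉ closure I)
    (hD : ∀ t ∈ Set.Icc (0:ℝ) 1, ∃ s > (0:ℝ), σ t + s • σ' t ∈ I)
    (hg0 : c < ⟪u, σ 0⟫) (hg1 : c < ⟪u, σ 1⟫) :
    (∫ t in (0:ℝ)..1, Pmink I (σ t) (σ' t)) ≤
      Real.log (⟪u, σ 0⟫ - c) - Real.log (⟪u, σ 1⟫ - c) := by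
  set g : ℝ → ℝ := fun t => ⟪u, σ t⟫ - c with hgdef
  set g' : ℝ → ℝ := fun t => ⟪u, σ' t⟫ with hg'def
  have hg' : ∀ t ∈ Set.Icc (0:ℝ) 1, HasDerivAt g (g' t) t := by
    intro t ht
    have h1 : HasDerivAt (fun t => ⟪u, σ t⟫) (⟪u, σ' t⟫) t := by
      have := (innerSL ℝ u).hasFDerivAt.comp_hasDerivAt t (hσ t ht)
      simp at this
      exact this
    simpa [hgdef] using h1.sub_const c
  have hσcont : ContinuousOn σ (Set.Icc (0:ℝ) 1) :=
    fun t ht => (hσ t ht).continuousAt.continuousWithinAt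
  have hgcont : ContinuousOn g (Set.Icc (0:ℝ) 1) :=
    (((innerSL ℝ u).continuous.comp_continuousOn hσcont)).sub continuousOn_const
  have hg'cont : ContinuousOn g' (Set.Icc (0:ℝ) 1) :=
    (innerSL ℝ u).continuous.comp_continuousOn hσ'
  -- key inequality
  have key : ∀ t ∈ Set.Icc (0:ℝ) 1,
      0 < tauF I (σ t) (σ' t) ∧ tauF I (σ t) (σ' t) * g' t ≤ -(g t) := by
    intro t ht
    obtain ⟨s, hs, hsI⟩ := hD t ht
    obtain ⟨hτ, hτmem⟩ := tau_mem (hΩ t ht) ⟨s, hs, subset_closure hsI⟩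
    refine ⟨hτ, ?_⟩
    have := hIc hτmem
    simp only [Set.mem_setOf_eq, inner_add_right, real_inner_smul_right] at this
    simp only [hgdef, hg'def]
    linarith
  have hgderivneg : ∀ t ∈ Set.Icc (0:ℝ) 1, 0 < g t → g' t < 0 := by
    intro t ht hgt
    obtain ⟨hτ, hkey⟩ := key t ht
    nlinarith
  -- positivity of g on [0,1]
  have hpos : ∀ t ∈ Set.Icc (0:ℝ) 1, 0 < g t := by
    by_contra hcon
    push_neg at hcon
    obtain ⟨t₀, ht₀, hgt₀⟩ := hcon
    set T := Set.Icc (0:ℝ) 1 ∩ g ⁻¹' Set.Iic 0 with hT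
    have hTclosed : IsClosed T :=
      hgcont.preimage_isClosed_of_isClosed isClosed_Icc (isClosed_Iic (a := (0:ℝ)))
    have hTne : T.Nonempty := ⟨t₀, ht₀, hgt₀⟩
    have hTbdd : BddAbove T := ⟨1, fun x hx => hx.1.2⟩
    have ht₂mem := hTclosed.csSup_mem hTne hTbdd
    set t₂ := sSup T with ht₂def
    have ht₂I : t₂ ∈ Set.Icc (0:ℝ) 1 := ht₂mem.1
    have hgt₂ : g t₂ ≤ 0 := ht₂mem.2
    have hg1pos : 0 < g 1 := sub_pos.2 hg1
    have ht₂lt : t₂ < 1 := lt_of_le_of_ne ht₂I.2 (by intro h; rw [h] at hgt₂; linarith)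
    have hgtpos : ∀ t ∈ Set.Ioc t₂ 1, 0 < g t := by
      intro t ht
      by_contra h
      push_neg at h
      have : t ∈ T := ⟨⟨le_trans ht₂I.1 ht.1.le, ht.2⟩, h⟩
      exact absurd (le_csSup hTbdd this) (not_le.2 ht.1)
    have hanti : StrictAntiOn g (Set.Icc t₂ 1) := by
      apply strictAntiOn_of_deriv_neg (convex_Icc t₂ 1)
        (hgcont.mono (Set.Icc_subset_Icc ht₂I.1 le_rfl))
      intro t ht
      rw [interior_Icc] at ht
      have htI : t ∈ Set.Icc (0:ℝ) 1 := ⟨le_trans ht₂I.1 ht.1.le, ht.2.le⟩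
      rw [(hg' t htI).deriv]
      exact hgderivneg t htI (hgtpos t ⟨ht.1, ht.2.le⟩)
    have := hanti (Set.left_mem_Icc.2 ht₂lt.le) (Set.right_mem_Icc.2 ht₂lt.le) ht₂lt
    linarith
  -- bound function
  set B : ℝ → ℝ := fun t => -((g t)⁻¹ * g' t) with hBdef
  have hBcont : ContinuousOn B (Set.Icc (0:ℝ) 1) :=
    ((hgcont.inv₀ (fun t ht => (hpos t ht).ne')).mul hg'cont).neg
  have hBderiv : ∀ t ∈ Set.Icc (0:ℝ) 1, HasDerivAt (fun t => -Real.log (g t)) (B t) t := by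
    intro t ht
    exact ((Real.hasDerivAt_log (hpos t ht).ne').comp t (hg' t ht)).neg
  have hBint : IntervalIntegrable B MeasureTheory.volume 0 1 := by
    apply ContinuousOn.intervalIntegrable
    rwa [Set.uIcc_of_le zero_le_one]
  have hBeq : (∫ t in (0:ℝ)..1, B t) = Real.log (g 0) - Real.log (g 1) := by
    rw [intervalIntegral.integral_eq_sub_of_hasDerivAt (fun t ht => by
      rw [Set.uIcc_of_le zero_le_one] at ht; exact hBderiv t ht) hBint]
    ring
  have hptwise : ∀ t ∈ Set.Icc (0:ℝ) 1, Pmink I (σ t) (σ' t) ≤ B t := by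
    intro t ht
    obtain ⟨hτ, hkey⟩ := key t ht
    have hgt := hpos t ht
    show 1 / tauF I (σ t) (σ' t) ≤ B t
    set τ := tauF I (σ t) (σ' t) with hτdef
    have hBt : B t = -((g t)⁻¹ * g' t) := rfl
    rw [hBt, div_le_iff₀ hτ]
    have h4 : (g t)⁻¹ * (g t) ≤ (g t)⁻¹ * (-(τ * g' t)) :=
      mul_le_mul_of_nonneg_left (by linarith) (inv_nonneg.2 hgt.le)
    have h5 : (g t)⁻¹ * g t = 1 := inv_mul_cancel₀ hgt.ne'
    have h6 : -((g t)⁻¹ * g' t) * τ = (g t)⁻¹ * (-(τ * g' t)) := by ring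
    linarith
  have hg1pos : 0 < g 1 := sub_pos.2 hg1
  have hg0pos : 0 < g 0 := sub_pos.2 hg0
  have hfinal : Real.log (g 0) - Real.log (g 1) =
      Real.log (⟪u, σ 0⟫ - c) - Real.log (⟪u, σ 1⟫ - c) := rfl
  by_cases hInt : IntervalIntegrable (fun t => Pmink I (σ t) (σ' t)) MeasureTheory.volume 0 1
  · calc (∫ t in (0:ℝ)..1, Pmink I (σ t) (σ' t)) ≤ ∫ t in (0:ℝ)..1, B t :=
        intervalIntegral.integral_mono_on zero_le_one hInt hBint hptwise
      _ = _ := by rw [hBeq]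
  · rw [intervalIntegral.integral_undef hInt]
    rw [← hfinal]
    have hmono : g 1 < g 0 := by
      have hanti : StrictAntiOn g (Set.Icc (0:ℝ) 1) := by
        apply strictAntiOn_of_deriv_neg (convex_Icc 0 1) hgcont
        intro t ht
        rw [interior_Icc] at ht
        have htI : t ∈ Set.Icc (0:ℝ) 1 := ⟨ht.1.le, ht.2.le⟩
        rw [(hg' t htI).deriv]
        exact hgderivneg t htI (hpos t htI)
      exact hanti (Set.left_mem_Icc.2 zero_le_one) (Set.right_mem_Icc.2 zero_le_one) zero_lt_one
    have := Real.log_le_log hg1pos hmono.le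
    linarith

set_option maxHeartbeats 2000000 in
/-- the timelike Funk metric is the intrinsic timelike Finsler distance of
the Minkowski functional `P`: every timelike `C¹` curve from `p` to `q` has length at most
`F(p,q)`, and `F(p,q)` is the greatest such length (attained by the straight segment). -/
theorem funkF_is_sup_of_timelike_lengths {n : ℕ} (hn : 1 ≤ n) (I : Set (Euc n))
    (hne : I.Nonempty) (hop : IsOpen I) (hconv : Convex ℝ I)
    (hcl : closure I ≠ Set.univ)
    (p q : Euc n) (hp : p ∈ Omega I) (hq : q ∈ Omega I)
    (hpq : funkLt I p q) :
    (∀ σ σ' : ℝ → Euc n,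
      (∀ t ∈ Set.Icc (0:ℝ) 1, HasDerivAt σ (σ' t) t) →
      ContinuousOn σ' (Set.Icc (0:ℝ) 1) →
      σ 0 = p → σ 1 = q →
      (∀ t ∈ Set.Icc (0:ℝ) 1, σ t ∈ Omega I) →
      (∀ t ∈ Set.Icc (0:ℝ) 1, σ' t ∈ Dcone I (σ t)) →
      (∫ t in (0:ℝ)..1, Pmink I (σ t) (σ' t)) ≤ funkF I p q) ∧
    IsGreatest {L : ℝ | ∃ σ σ' : ℝ → Euc n,
      (∀ t ∈ Set.Icc (0:ℝ) 1, HasDerivAt σ (σ' t) t) ∧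
      ContinuousOn σ' (Set.Icc (0:ℝ) 1) ∧
      σ 0 = p ∧ σ 1 = q ∧
      (∀ t ∈ Set.Icc (0:ℝ) 1, σ t ∈ Omega I) ∧
      (∀ t ∈ Set.Icc (0:ℝ) 1, σ' t ∈ Dcone I (σ t)) ∧
      L = ∫ t in (0:ℝ)..1, Pmink I (σ t) (σ' t)} (funkF I p q) := by
  obtain ⟨hpq_ne, hseg, t₁, ht₁pos, ht₁I⟩ := hpq
  have hqcl : q ∉ closure I := hq
  have hbddT0 : BddBelow {t : ℝ | 0 < t ∧ q + t • (q - p) ∈ closure I} :=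
    ⟨0, fun x hx => hx.1.le⟩
  obtain ⟨ht0pos, hbcl⟩ :=
    tau_mem (I := I) (p := q) (v := q - p) hqcl ⟨t₁, ht₁pos, subset_closure ht₁I⟩
  have ht0eq : funkT0 I p q = tauF I q (q - p) := rfl
  set t₀ := funkT0 I p q with ht₀def
  have ht0pos' : 0 < t₀ := by rw [ht0eq]; exact ht0pos
  have hbcl' : q + t₀ • (q - p) ∈ closure I := by rw [ht0eq]; exact hbcl
  set b := funkB I p q with hbdef
  have hbval : b = q + t₀ • (q - p) := rfl
  -- b ∉ I
  have hbI : b ∉ I := by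
    intro hbmem
    have hcont : Continuous (fun s : ℝ => q + s • (q - p)) := by continuity
    have hnb : (fun s : ℝ => q + s • (q - p)) ⁻¹' I ∈ nhds t₀ := by
      apply hcont.continuousAt.preimage_mem_nhds
      exact hop.mem_nhds (by rw [← hbval]; exact hbmem)
    obtain ⟨δ, hδ, hsub⟩ := Metric.mem_nhds_iff.1 hnb
    set s := max (t₀ - δ/2) (t₀/2) with hsdef
    have hsl : t₀ - δ/2 ≤ s := le_max_left _ _
    have hs1 : s < t₀ := max_lt (by linarith) (by linarith)
    have hs0 : 0 < s := lt_of_lt_of_le (by linarith) (le_max_right _ _)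
    have hsball : s ∈ Metric.ball t₀ δ := by
      rw [Metric.mem_ball, Real.dist_eq, abs_lt]
      constructor <;> linarith
    have hle : t₀ ≤ s :=
      csInf_le hbddT0 ⟨hs0, subset_closure (hsub hsball)⟩
    linarith
  -- supporting hyperplane
  obtain ⟨f, hf⟩ := geometric_hahn_banach_open_point hconv hop hbI
  set u := (InnerProductSpace.toDual ℝ (Euc n)).symm f with hudef
  have hux : ∀ x : Euc n, ⟪u, x⟫ = f x := fun x => InnerProductSpace.toDual_symm_apply
  set c := ⟪u, b⟫ with hcdef
  have hIlt : ∀ x ∈ I, ⟪u, x⟫ < c := by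
    intro x hx
    rw [hux, hcdef, hux]
    exact hf x hx
  have hcl_le : closure I ⊆ {x | ⟪u, x⟫ ≤ c} := by
    apply closure_minimal (fun x hx => le_of_lt (hIlt x hx))
    exact isClosed_le (innerSL ℝ u).continuous continuous_const
  -- a := ⟪u, q - p⟫ < 0
  have hcval : c = ⟪u, q⟫ + t₀ * ⟪u, q - p⟫ := by
    rw [hcdef, hbval, inner_add_right, real_inner_smul_right]
  have ht₁gt : t₀ < t₁ := by
    have h1 : t₀ ≤ t₁ := csInf_le hbddT0 ⟨ht₁pos, subset_closure ht₁I⟩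
    rcases lt_or_eq_of_le h1 with h | h
    · exact h
    · exfalso; apply hbI; rw [hbval, h]; exact ht₁I
  have ha : ⟪u, q - p⟫ < 0 := by
    have h2 := hIlt _ ht₁I
    rw [inner_add_right, real_inner_smul_right] at h2
    nlinarith
  have hsub_eq : ⟪u, q - p⟫ = ⟪u, q⟫ - ⟪u, p⟫ := inner_sub_right u q p
  have hupc : ⟪u, p⟫ - c = (1 + t₀) * (-⟪u, q - p⟫) := by
    rw [hcval]; linarith [hsub_eq]
  have huqc : ⟪u, q⟫ - c = t₀ * (-⟪u, q - p⟫) := by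
    rw [hcval]; ring
  have hp0 : c < ⟪u, p⟫ := by nlinarith
  have hq0 : c < ⟪u, q⟫ := by nlinarith
  -- value of funkF
  have hqp_ne : q - p ≠ 0 := sub_ne_zero.2 (Ne.symm hpq_ne)
  have hqp_pos : 0 < ‖q - p‖ := norm_pos_iff.2 hqp_ne
  have hFval : funkF I p q = Real.log (1 + t₀) - Real.log t₀ := by
    rw [funkF, if_neg hpq_ne]
    have hd1 : dist p (funkB I p q) = (1 + t₀) * ‖q - p‖ := by
      rw [dist_eq_norm]
      have he : p - (q + t₀ • (q - p)) = -((1 + t₀) • (q - p)) := by module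
      rw [show funkB I p q = q + t₀ • (q - p) from rfl, he, norm_neg, norm_smul,
        Real.norm_eq_abs, abs_of_pos (by linarith)]
    have hd2 : dist q (funkB I p q) = t₀ * ‖q - p‖ := by
      rw [dist_eq_norm]
      have he : q - (q + t₀ • (q - p)) = -(t₀ • (q - p)) := by module
      rw [show funkB I p q = q + t₀ • (q - p) from rfl, he, norm_neg, norm_smul,
        Real.norm_eq_abs, abs_of_pos ht0pos']
    rw [hd1, hd2, mul_div_mul_right _ _ hqp_pos.ne',
      Real.log_div (by linarith) ht0pos'.ne']
  have hlogeq : Real.log (⟪u, p⟫ - c) - Real.log (⟪u, q⟫ - c) = funkF I p q := by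
    rw [hupc, huqc, Real.log_mul (by linarith) (by linarith),
      Real.log_mul ht0pos'.ne' (by linarith), hFval]
    ring
  -- part 1
  have hmain : ∀ σ σ' : ℝ → Euc n,
      (∀ t ∈ Set.Icc (0:ℝ) 1, HasDerivAt σ (σ' t) t) →
      ContinuousOn σ' (Set.Icc (0:ℝ) 1) →
      σ 0 = p → σ 1 = q →
      (∀ t ∈ Set.Icc (0:ℝ) 1, σ t ∈ Omega I) →
      (∀ t ∈ Set.Icc (0:ℝ) 1, σ' t ∈ Dcone I (σ t)) →
      (∫ t in (0:ℝ)..1, Pmink I (σ t) (σ' t)) ≤ funkF I p q := by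
    intro σ σ' h1 h2 h3 h4 h5 h6
    have := length_le_log hcl_le h1 h2 (fun t ht => h5 t ht)
      (fun t ht => h6 t ht) (by rw [h3]; exact hp0) (by rw [h4]; exact hq0)
    rw [h3, h4] at this
    exact this.trans (le_of_eq hlogeq)
  refine ⟨hmain, ?_, ?_⟩
  · -- membership: the straight segment
    refine ⟨fun t => p + t • (q - p), fun _ => q - p, ?_, continuousOn_const, by simp, ?_, ?_, ?_, ?_⟩
    · intro t _
      simpa using ((hasDerivAt_id t).smul_const (q - p)).const_add p
    · simp
    · intro t ht
      apply hseg
      rw [segment_eq_image']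
      exact ⟨t, ht, rfl⟩
    · intro t ht
      refine ⟨1 + t₁ - t, by linarith [ht.2], ?_⟩
      have he : p + t • (q - p) + (1 + t₁ - t) • (q - p) = q + t₁ • (q - p) := by module
      rw [he]; exact ht₁I
    · -- the integral along the segment equals funkF
      have htau : ∀ t ∈ Set.Icc (0:ℝ) 1,
          tauF I (p + t • (q - p)) (q - p) = 1 + t₀ - t := by
        intro t ht
        have hkey : p + t • (q - p) + (1 + t₀ - t) • (q - p) = q + t₀ • (q - p) := by module
        have hbddS : BddBelow {s : ℝ | 0 < s ∧ p + t • (q - p) + s • (q - p) ∈ closure I} :=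
          ⟨0, fun x hx => hx.1.le⟩
        apply le_antisymm
        · apply csInf_le hbddS
          exact ⟨by linarith [ht.2], by rw [hkey]; exact hbcl'⟩
        · have hne2 : {s : ℝ | 0 < s ∧ p + t • (q - p) + s • (q - p) ∈ closure I}.Nonempty :=
            ⟨1 + t₀ - t, by linarith [ht.2], by rw [hkey]; exact hbcl'⟩
          apply le_csInf hne2
          rintro s ⟨hs0, hsmem⟩
          by_contra hlt
          push_neg at hlt
          rcases le_or_gt (t + s) 1 with hc1 | hc2
          · have hmem' : p + (t + s) • (q - p) ∈ segment ℝ p q := by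
              rw [segment_eq_image']
              exact ⟨t + s, ⟨by linarith [ht.1], hc1⟩, rfl⟩
            have he2 : p + t • (q - p) + s • (q - p) = p + (t + s) • (q - p) := by module
            rw [he2] at hsmem
            exact (hseg hmem') hsmem
          · have he3 : p + t • (q - p) + s • (q - p) = q + (t + s - 1) • (q - p) := by module
            rw [he3] at hsmem
            have : t₀ ≤ t + s - 1 := csInf_le hbddT0 ⟨by linarith, hsmem⟩
            linarith
      have hEqOn : Set.EqOn (fun t => Pmink I (p + t • (q - p)) (q - p))
          (fun t => 1 / (1 + t₀ - t)) (Set.uIcc (0:ℝ) 1) := by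
        intro t ht
        rw [Set.uIcc_of_le zero_le_one] at ht
        show 1 / tauF I (p + t • (q - p)) (q - p) = 1 / (1 + t₀ - t)
        rw [htau t ht]
      have hIval : (∫ t in (0:ℝ)..1, 1 / (1 + t₀ - t)) =
          Real.log (1 + t₀) - Real.log t₀ := by
        have hderiv : ∀ t ∈ Set.uIcc (0:ℝ) 1,
            HasDerivAt (fun t => -Real.log (1 + t₀ - t)) (1 / (1 + t₀ - t)) t := by
          intro t ht
          rw [Set.uIcc_of_le zero_le_one] at ht
          have hne : (1 + t₀ - t) ≠ 0 := by
            have h2 := ht.2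
            have : (0:ℝ) < 1 + t₀ - t := by linarith
            exact this.ne'
          have hlin : HasDerivAt (fun t : ℝ => 1 + t₀ - t) (-1) t := by
            simpa using ((hasDerivAt_id t).const_sub (1 + t₀))
          have := ((Real.hasDerivAt_log hne).comp t hlin).neg
          simp [one_div] at this
          rw [one_div]
          exact this
        have hint : IntervalIntegrable (fun t => 1 / (1 + t₀ - t))
            MeasureTheory.volume 0 1 := by
          apply ContinuousOn.intervalIntegrable
          rw [Set.uIcc_of_le zero_le_one]
          apply ContinuousOn.div continuousOn_const
            (by fun_prop)
          intro t ht
          have h2 := ht.2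
          have : (0:ℝ) < 1 + t₀ - t := by linarith
          exact this.ne'
        rw [intervalIntegral.integral_eq_sub_of_hasDerivAt hderiv hint]
        norm_num
        ring
      rw [intervalIntegral.integral_congr hEqOn, hIval, hFval]
  · -- upper bound
    rintro L ⟨σ, σ', h1, h2, h3, h4, h5, h6, rfl⟩
    exact hmain σ σ' h1 h2 h3 h4 h5 h6
end
end

section
/- Super-level sets of the past-directed timelike Funk distance are convex: for every x ∈ Ω and every real r > 0, the set S_r(x) = {p ∈ Ω : p < x ∧ F(p,x) > r} is a convex subset of E. -/
open RealInnerProductSpace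
open scoped Classical

noncomputable section

section Aux

variable {n : ℕ}

lemma funkT0_bddBelow (I : Set (Euc n)) (p x : Euc n) :
    BddBelow {t : ℝ | 0 < t ∧ x + t • (x - p) ∈ closure I} :=
  ⟨0, fun t ht => le_of_lt ht.1⟩

lemma funkT0_lb {I : Set (Euc n)} {p x : Euc n} (hx : x ∈ Omega I) (hpx : p ≠ x) :
    ∃ ε > (0:ℝ), ∀ t : ℝ, 0 < t → x + t • (x - p) ∈ closure I → ε ≤ t := by
  have hxo : x ∈ (closure I)ᶜ := hx
  obtain ⟨ε, hε, hball⟩ := Metric.isOpen_iff.mp isClosed_closure.isOpen_compl x hxo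
  have hnorm : 0 < ‖x - p‖ := by
    rw [norm_pos_iff]
    exact sub_ne_zero.mpr hpx.symm
  refine ⟨ε / ‖x - p‖, div_pos hε hnorm, ?_⟩
  intro t ht hmem
  by_contra hlt
  push_neg at hlt
  have hb : x + t • (x - p) ∈ Metric.ball x ε := by
    rw [Metric.mem_ball, dist_eq_norm]
    have h1 : x + t • (x - p) - x = t • (x - p) := by abel
    rw [h1, norm_smul, Real.norm_eq_abs, abs_of_pos ht]
    calc t * ‖x - p‖ < (ε / ‖x - p‖) * ‖x - p‖ := by
          exact mul_lt_mul_of_pos_right hlt hnorm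
      _ = ε := by field_simp
  exact (hball hb) hmem

lemma funkT0_pos {I : Set (Euc n)} {p x : Euc n} (hx : x ∈ Omega I)
    (h : funkLt I p x) : 0 < funkT0 I p x := by
  obtain ⟨hpx, -, t, ht, htI⟩ := h
  obtain ⟨ε, hε, hlb⟩ := funkT0_lb hx hpx
  have hne : {t : ℝ | 0 < t ∧ x + t • (x - p) ∈ closure I}.Nonempty :=
    ⟨t, ht, subset_closure htI⟩
  have : ε ≤ funkT0 I p x := le_csInf hne fun s hs => hlb s hs.1 hs.2
  linarith

lemma funkF_eq {I : Set (Euc n)} {p x : Euc n} (hpx : p ≠ x)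
    (ht : 0 < funkT0 I p x) :
    funkF I p x = Real.log ((1 + funkT0 I p x) / funkT0 I p x) := by
  set t0 := funkT0 I p x with ht0
  have hnorm : 0 < ‖x - p‖ := by
    rw [norm_pos_iff]; exact sub_ne_zero.mpr hpx.symm
  rw [funkF, if_neg hpx]
  have hb : funkB I p x = x + t0 • (x - p) := rfl
  have h1 : dist p (funkB I p x) = (1 + t0) * ‖x - p‖ := by
    rw [hb, dist_eq_norm]
    have h : p - (x + t0 • (x - p)) = -((1 + t0) • (x - p)) := by module
    rw [h, norm_neg, norm_smul, Real.norm_eq_abs, abs_of_pos (by linarith)]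
  have h2 : dist x (funkB I p x) = t0 * ‖x - p‖ := by
    rw [hb, dist_eq_norm]
    have h : x - (x + t0 • (x - p)) = -(t0 • (x - p)) := by abel
    rw [h, norm_neg, norm_smul, Real.norm_eq_abs, abs_of_pos ht]
  rw [h1, h2, mul_div_mul_right _ _ hnorm.ne']

lemma superlevel_iff {I : Set (Euc n)} {p x : Euc n} (hx : x ∈ Omega I)
    (h : funkLt I p x) {r : ℝ} (hr : 0 < r) :
    r < funkF I p x ↔ funkT0 I p x < 1 / (Real.exp r - 1) := by
  have ht := funkT0_pos hx h
  have he : (1:ℝ) < Real.exp r := Real.one_lt_exp_iff.mpr hr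
  rw [funkF_eq h.1 ht]
  rw [Real.lt_log_iff_exp_lt (by positivity)]
  rw [lt_div_iff₀ ht, lt_div_iff₀ (by linarith : (0:ℝ) < Real.exp r - 1)]
  constructor <;> intro hh <;> nlinarith

end Aux

lemma harmonic_comb {n : ℕ} {a b t₁ t₂ : ℝ} (ha : 0 < a) (hb : 0 < b)
    (hab : a + b = 1) (ht₁ : 0 < t₁) (ht₂ : 0 < t₂) (x p₁ p₂ : Euc n) :
    ∃ μ₁ μ₂ : ℝ, 0 ≤ μ₁ ∧ 0 ≤ μ₂ ∧ μ₁ + μ₂ = 1 ∧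
      x + (t₁ * t₂ / (a * t₂ + b * t₁)) • (x - (a • p₁ + b • p₂)) =
        μ₁ • (x + t₁ • (x - p₁)) + μ₂ • (x + t₂ • (x - p₂)) := by
  have hD : 0 < a * t₂ + b * t₁ := by positivity
  refine ⟨a * t₂ / (a * t₂ + b * t₁), b * t₁ / (a * t₂ + b * t₁),
    by positivity, by positivity, by field_simp, ?_⟩
  match_scalars
  · field_simp
    linear_combination (-(t₁ * t₂)) * hab
  · ring
  · ring

lemma harmonic_lt {a b t₁ t₂ c : ℝ} (ha : 0 < a) (hb : 0 < b) (hab : a + b = 1)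
    (ht₁ : 0 < t₁) (ht₂ : 0 < t₂) (h₁ : t₁ < c) (h₂ : t₂ < c) :
    t₁ * t₂ / (a * t₂ + b * t₁) < c := by
  have hD : 0 < a * t₂ + b * t₁ := by positivity
  rw [div_lt_iff₀ hD]
  have h3 : t₁ * t₂ * (a + b) = t₁ * t₂ := by rw [hab]; ring
  nlinarith [mul_pos (mul_pos ha ht₂) (sub_pos.mpr h₁),
    mul_pos (mul_pos hb ht₁) (sub_pos.mpr h₂)]

/-- super-level sets of the past-directed timelike Funk distance are
convex: for `x ∈ Ω` and `r > 0`, the set `{p ∈ Ω | p < x ∧ F(p,x) > r}` is convex. -/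
theorem convex_funkF_superlevel {n : ℕ} (hn : 1 ≤ n) (I : Set (Euc n))
    (hne : I.Nonempty) (hop : IsOpen I) (hconv : Convex ℝ I)
    (hcl : closure I ≠ Set.univ)
    (x : Euc n) (hx : x ∈ Omega I) (r : ℝ) (hr : 0 < r) :
    Convex ℝ {p | p ∈ Omega I ∧ funkLt I p x ∧ r < funkF I p x} := by
  have he : (1:ℝ) < Real.exp r := Real.one_lt_exp_iff.mpr hr
  have hcpos : 0 < 1 / (Real.exp r - 1) := by
    apply div_pos one_pos; linarith
  intro p₁ hp₁ p₂ hp₂ a b ha hb hab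
  rcases eq_or_lt_of_le ha with h0 | ha'
  · have hb1 : b = 1 := by linarith
    simpa [← h0, hb1] using hp₂
  rcases eq_or_lt_of_le hb with h0 | hb'
  · have ha1 : a = 1 := by linarith
    simpa [← h0, ha1] using hp₁
  obtain ⟨hΩ₁, hlt₁, hF₁⟩ := hp₁
  obtain ⟨hΩ₂, hlt₂, hF₂⟩ := hp₂
  -- extract closure-hitting times below c
  have hT₁ : funkT0 I p₁ x < 1 / (Real.exp r - 1) := (superlevel_iff hx hlt₁ hr).mp hF₁
  have hT₂ : funkT0 I p₂ x < 1 / (Real.exp r - 1) := (superlevel_iff hx hlt₂ hr).mp hF₂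
  have hne₁ : {t : ℝ | 0 < t ∧ x + t • (x - p₁) ∈ closure I}.Nonempty := by
    obtain ⟨-, -, t, ht, htI⟩ := hlt₁; exact ⟨t, ht, subset_closure htI⟩
  have hne₂ : {t : ℝ | 0 < t ∧ x + t • (x - p₂) ∈ closure I}.Nonempty := by
    obtain ⟨-, -, t, ht, htI⟩ := hlt₂; exact ⟨t, ht, subset_closure htI⟩
  obtain ⟨t₁, ⟨ht₁, hy₁⟩, ht₁c⟩ :=
    (csInf_lt_iff (funkT0_bddBelow I p₁ x) hne₁).mp hT₁
  obtain ⟨t₂, ⟨ht₂, hy₂⟩, ht₂c⟩ :=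
    (csInf_lt_iff (funkT0_bddBelow I p₂ x) hne₂).mp hT₂
  -- step 1: ∃ s > 0 with x + s • (x - p) ∈ I (harmonic mean of s₁ s₂)
  obtain ⟨-, -, s₁, hs₁, hz₁⟩ := hlt₁
  obtain ⟨-, -, s₂, hs₂, hz₂⟩ := hlt₂
  have hexI : ∃ s > (0:ℝ), x + s • (x - (a • p₁ + b • p₂)) ∈ I := by
    obtain ⟨ν₁, ν₂, hν₁, hν₂, hνsum, hkey⟩ :=
      harmonic_comb ha' hb' hab hs₁ hs₂ x p₁ p₂
    refine ⟨s₁ * s₂ / (a * s₂ + b * s₁), by positivity, ?_⟩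
    rw [hkey]
    exact hconv hz₁ hz₂ hν₁ hν₂ hνsum
  obtain ⟨s, hs, hzI⟩ := hexI
  -- p ≠ x
  have hpx : a • p₁ + b • p₂ ≠ x := by
    intro h
    rw [h] at hzI
    simp only [sub_self, smul_zero, add_zero] at hzI
    exact hx (subset_closure hzI)
  -- step 2: harmonic mean T of t₁, t₂ : x + T • (x - p) ∈ closure I, 0 < T < c
  have hstep2 : ∃ T, 0 < T ∧ T < 1 / (Real.exp r - 1) ∧
      x + T • (x - (a • p₁ + b • p₂)) ∈ closure I := by
    obtain ⟨μ₁, μ₂, hμ₁, hμ₂, hμsum, hkey⟩ :=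
      harmonic_comb ha' hb' hab ht₁ ht₂ x p₁ p₂
    refine ⟨t₁ * t₂ / (a * t₂ + b * t₁), by positivity,
      harmonic_lt ha' hb' hab ht₁ ht₂ ht₁c ht₂c, ?_⟩
    rw [hkey]
    exact hconv.closure hy₁ hy₂ hμ₁ hμ₂ hμsum
  obtain ⟨T, hTpos, hTc, hw⟩ := hstep2
  -- step 3: segment p x ⊆ Omega I
  have hseg : segment ℝ (a • p₁ + b • p₂) x ⊆ Omega I := by
    rintro z ⟨u, v, hu, hv, huv, rfl⟩
    intro hzcl
    rcases eq_or_lt_of_le hu with h0 | hu'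
    · have hv1 : v = 1 := by linarith
      rw [← h0, hv1] at hzcl
      simp only [zero_smul, one_smul, zero_add] at hzcl
      exact hx hzcl
    · have htu : 0 < T + u := by linarith
      have hcomb : x = (T / (T + u)) • (u • (a • p₁ + b • p₂) + v • x)
          + (u / (T + u)) • (x + T • (x - (a • p₁ + b • p₂))) := by
        match_scalars
        · field_simp
          linear_combination (-T) * huv
        · field_simp
          ring
        · field_simp
          ring
      refine hx ?_
      rw [hcomb]
      exact hconv.closure hzcl hw (by positivity) (by positivity)
        (by field_simp)
  have hpΩ : (a • p₁ + b • p₂) ∈ Omega I :=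
    hseg (left_mem_segment ℝ _ x)
  have hlt : funkLt I (a • p₁ + b • p₂) x := ⟨hpx, hseg, s, hs, hzI⟩
  refine ⟨hpΩ, hlt, ?_⟩
  rw [superlevel_iff hx hlt hr]
  exact lt_of_le_of_lt (csInf_le (funkT0_bddBelow I _ x) ⟨hTpos, hw⟩) hTc
end
end
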